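/- Let (u_n) be a non-increasing sequence of positive real numbers converging to 0 and let C > 0. If for all sufficiently large n one has u_n − u_{n+1} ≥ C·u_n²·log(1/u_n), then limsup_{n→∞} u_n·n·log n ≤ 1/C. -/

import Mathlib

open Filter Real

private lemma sum_log_ge (n : ℕ) :
    (n : ℝ) * Real.log n - 2 * n ≤ ∑ i ∈ Finset.Ico 1 n, Real.log i := by
  induction n with
  | zero => simp
  | succ n ih =>
    rcases Nat.eq_zero_or_pos n with h0 | h1
    · subst h0; simp
    · rw [Finset.sum_Ico_succ_top h1]
      have hn : (1:ℝ) ≤ (n:ℝ) := by exact_mod_cast h1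
      have hlog : Real.log (((n:ℝ)+1)/(n:ℝ)) ≤ ((n:ℝ)+1)/(n:ℝ) - 1 :=
        Real.log_le_sub_one_of_pos (by positivity)
      rw [Real.log_div (by positivity) (by positivity)] at hlog
      have h2 : ((n:ℝ)+1)/(n:ℝ) - 1 = 1/(n:ℝ) := by field_simp; ring
      rw [h2] at hlog
      have h3 : ((n:ℝ)+1) * (Real.log ((n:ℝ)+1) - Real.log n) ≤ ((n:ℝ)+1) * (1/(n:ℝ)) :=
        mul_le_mul_of_nonneg_left hlog (by positivity)
      have h4 : ((n:ℝ)+1) * (1/(n:ℝ)) ≤ 2 := by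
        rw [mul_one_div, div_le_iff₀ (by positivity)]; nlinarith
      push_cast
      nlinarith

theorem stmt_3 (u : ℕ → ℝ) (hpos : ∀ n, 0 < u n)
    (hmono : ∀ n, u (n + 1) ≤ u n)
    (hlim : Tendsto u atTop (nhds 0))
    (C : ℝ) (hC : 0 < C)
    (hrec : ∀ᶠ n in atTop, C * u n ^ 2 * Real.log (1 / u n) ≤ u n - u (n + 1)) :
    limsup (fun n : ℕ => ((u n * n * Real.log n : ℝ) : EReal)) atTop ≤
      ((1 / C : ℝ) : EReal) := by
  set w : ℕ → ℝ := fun n => (u n)⁻¹ with hwdef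
  have hwpos : ∀ n, 0 < w n := fun n => inv_pos.mpr (hpos n)
  -- w tends to infinity
  have hmem : Tendsto u atTop (nhdsWithin (0:ℝ) (Set.Ioi 0)) :=
    tendsto_nhdsWithin_iff.mpr ⟨hlim, Eventually.of_forall hpos⟩
  have hw_top : Tendsto w atTop atTop := hmem.inv_tendsto_nhdsGT_zero
  have hlogw : Tendsto (fun n => Real.log (w n)) atTop atTop :=
    Real.tendsto_log_atTop.comp hw_top
  -- Step 1: the recursion for w
  obtain ⟨N0, hN0⟩ := eventually_atTop.mp (hrec.and (hlim.eventually_lt_const one_pos))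
  have hstep : ∀ n, N0 ≤ n → w n + C * Real.log (w n) ≤ w (n + 1) := by
    intro n hn
    obtain ⟨h1, h2⟩ := hN0 n hn
    have hun := hpos n
    have hun1 := hpos (n + 1)
    have hm := hmono n
    rw [one_div] at h1
    have hL : 0 ≤ Real.log ((u n)⁻¹) :=
      Real.log_nonneg (one_le_inv_iff₀.mpr ⟨hun, h2.le⟩)
    have e : w (n + 1) - w n = (u n - u (n + 1)) / (u n * u (n + 1)) := by
      simp only [hwdef]
      rw [eq_div_iff (by positivity : (0:ℝ) < u n * u (n + 1)).ne']
      field_simp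
    have key : C * Real.log ((u n)⁻¹) ≤ (u n - u (n + 1)) / (u n * u (n + 1)) := by
      rw [le_div_iff₀ (by positivity)]
      calc C * Real.log ((u n)⁻¹) * (u n * u (n + 1))
          ≤ C * Real.log ((u n)⁻¹) * (u n * u n) := by
            apply mul_le_mul_of_nonneg_left _ (by positivity)
            exact mul_le_mul_of_nonneg_left hm hun.le
        _ = C * u n ^ 2 * Real.log ((u n)⁻¹) := by ring
        _ ≤ u n - u (n + 1) := h1
    have hwn : Real.log (w n) = Real.log ((u n)⁻¹) := rfl
    rw [hwn]
    linarith
  -- Step 2: linear growth, hence w n ≥ n eventually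
  obtain ⟨N1', hN1'⟩ := eventually_atTop.mp (hlogw.eventually_ge_atTop (2 / C))
  set N1 := max N0 N1' with hN1def
  have hgrow : ∀ k : ℕ, w N1 + 2 * k ≤ w (N1 + k) := by
    intro k
    induction k with
    | zero => simp
    | succ k ih =>
      have h1 := hstep (N1 + k) (le_trans (le_max_left _ _) (Nat.le_add_right _ _))
      have h2 := hN1' (N1 + k) (le_trans (le_max_right _ _) (Nat.le_add_right _ _))
      have h3 : (2:ℝ) ≤ C * Real.log (w (N1 + k)) := by
        calc (2:ℝ) = C * (2 / C) := by field_simp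
          _ ≤ C * Real.log (w (N1 + k)) := mul_le_mul_of_nonneg_left h2 hC.le
      push_cast
      have he : N1 + (k + 1) = (N1 + k) + 1 := rfl
      rw [he]
      linarith
  have hwn : ∀ n, 2 * N1 ≤ n → (n : ℝ) ≤ w n := by
    intro n hn
    obtain ⟨k, rfl⟩ : ∃ k, n = N1 + k := ⟨n - N1, by omega⟩
    have hk : (N1 : ℝ) ≤ (k : ℝ) := by exact_mod_cast (show N1 ≤ k by omega)
    have h0 := hwpos N1
    have hg := hgrow k
    push_cast
    linarith
  -- Step 3: recursion with log n
  set N2 := 2 * N1 + 1 with hN2def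
  have hN0le : N0 ≤ N2 := le_trans (le_max_left _ N1') (by omega)
  have hstep2 : ∀ n, N2 ≤ n → w n + C * Real.log n ≤ w (n + 1) := by
    intro n hn
    have h1 := hstep n (le_trans hN0le hn)
    have h2 := hwn n (by omega)
    have hn1 : (1:ℝ) ≤ (n:ℝ) := by exact_mod_cast (show 1 ≤ n by omega)
    have h3 : Real.log n ≤ Real.log (w n) := Real.log_le_log (by linarith) h2
    have h4 : C * Real.log n ≤ C * Real.log (w n) := mul_le_mul_of_nonneg_left h3 hC.le
    linarith
  -- Step 4: summed recursion
  have hsum : ∀ n, N2 ≤ n → w N2 + C * ∑ i ∈ Finset.Ico N2 n, Real.log i ≤ w n := by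
    intro n hn
    induction n, hn using Nat.le_induction with
    | base => simp
    | succ n hn ih =>
      rw [Finset.sum_Ico_succ_top hn, mul_add]
      have := hstep2 n hn
      linarith
  set A := ∑ i ∈ Finset.Ico 1 N2, Real.log i with hAdef
  have hA0 : 0 ≤ A := by
    apply Finset.sum_nonneg
    intro i hi
    have : 1 ≤ i := (Finset.mem_Ico.mp hi).1
    exact Real.log_nonneg (by exact_mod_cast this)
  have hlower : ∀ n, N2 ≤ n → C * ((n:ℝ) * Real.log n - 2 * n - A) ≤ w n := by
    intro n hn
    have h1 := hsum n hn
    have h2 : A + ∑ i ∈ Finset.Ico N2 n, Real.log i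
        = ∑ i ∈ Finset.Ico 1 n, Real.log ((i:ℕ):ℝ) :=
      Finset.sum_Ico_consecutive _ (by omega) hn
    have h3 := sum_log_ge n
    have h4 : (n:ℝ) * Real.log n - 2 * n - A ≤ ∑ i ∈ Finset.Ico N2 n, Real.log i := by
      linarith
    have h5 := mul_le_mul_of_nonneg_left h4 hC.le
    linarith [hwpos N2]
  -- Final step
  have hlog_nat : Tendsto (fun n : ℕ => Real.log n) atTop atTop :=
    Real.tendsto_log_atTop.comp tendsto_natCast_atTop_atTop
  refine le_of_forall_gt_imp_ge_of_dense fun b hb => ?_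
  induction b using EReal.rec with
  | bot => exact absurd hb (not_lt.mpr bot_le)
  | top => exact le_top
  | coe x =>
    have hx : 1 / C < x := EReal.coe_lt_coe_iff.mp hb
    have hxC : 1 < x * C := (div_lt_iff₀ hC).mp hx
    have hx0 : 0 < x := lt_trans (by positivity) hx
    have hd : (0:ℝ) < x * C - 1 := by linarith
    apply Filter.limsup_le_of_le (by isBoundedDefault)
    have E1 : ∀ᶠ n : ℕ in atTop, N2 ≤ n := eventually_ge_atTop N2
    have E2 : ∀ᶠ n : ℕ in atTop, 4 * x * C / (x * C - 1) ≤ Real.log n :=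
      hlog_nat.eventually_ge_atTop _
    have E3 : ∀ᶠ n : ℕ in atTop, 2 * x * C * A / (x * C - 1) + 1 ≤ (n:ℝ) :=
      tendsto_natCast_atTop_atTop.eventually_ge_atTop _
    have E4 : ∀ᶠ n : ℕ in atTop, (1:ℝ) ≤ Real.log n := hlog_nat.eventually_ge_atTop _
    filter_upwards [E1, E2, E3, E4] with n h1 h2 h3 h4
    rw [EReal.coe_le_coe_iff]
    set Q := (n:ℝ) with hQdef
    set L := Real.log (n:ℝ) with hLdef
    have hQ1 : (1:ℝ) ≤ Q := by
      have : 0 ≤ 2 * x * C * A / (x * C - 1) := by positivity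
      linarith
    rw [div_le_iff₀ hd] at h2
    rw [div_add' _ _ _ (ne_of_gt hd), div_le_iff₀ hd] at h3
    -- h2 : 4*x*C ≤ L * (x*C-1);  h3 : 2*x*C*A + (x*C-1) ≤ Q * (x*C-1)
    have f1 : 4 * x * C * Q ≤ Q * L * (x * C - 1) := by nlinarith
    have f2 : 2 * x * C * A + (x * C - 1) ≤ Q * L * (x * C - 1) := by nlinarith
    have hposZ : 0 < Q * L - 2 * Q - A := by nlinarith
    have hwge := hlower n h1
    have hQL : (n:ℝ) * Real.log n = Q * L := rfl
    rw [hQL] at hwge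
    have hCZ : 0 < C * (Q * L - 2 * Q - A) := by positivity
    have hu : u n ≤ (C * (Q * L - 2 * Q - A))⁻¹ := by
      have h := inv_anti₀ hCZ hwge
      rwa [hwdef, inv_inv] at h
    have hP0 : 0 ≤ Q * L := by nlinarith
    calc u n * Q * L = u n * (Q * L) := by ring
      _ ≤ (C * (Q * L - 2 * Q - A))⁻¹ * (Q * L) := mul_le_mul_of_nonneg_right hu hP0
      _ ≤ x := by
        rw [inv_mul_le_iff₀ hCZ]
        nlinarith
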